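/- Let G=(V,E,w) be a connected weighted undirected graph with Laplacian L and let S be a nonempty proper subset of V. Then for any vertex u ∈ V∖S, the marginal gain Δ(u,S) = H(S) − H(S ∪ {u}) satisfies Δ(u,S) = (e_u^T (L_{−S})^{−1} d_{−S})² / (d · e_u^T (L_{−S})^{−1} e_u). -/

import Mathlib

open Matrix BigOperators Finset

-- sum over β (which injects onto α \ {u}) vs sum over α
private lemma sum_del {α β : Type*} [Fintype α] [DecidableEq α] [Fintype β]
    (u : α) (ι : β → α) (hinj : Function.Injective ι)
    (hrange : ∀ a : α, a ≠ u ↔ ∃ b, ι b = a) (f : α → ℝ) :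
    ∑ b : β, f (ι b) = (∑ a : α, f a) - f u := by
  have h1 : ∑ b : β, f (ι b) = ∑ a ∈ Finset.univ.erase u, f a := by
    refine Finset.sum_bij (fun b _ => ι b) ?_ ?_ ?_ ?_
    · intro b _
      exact Finset.mem_erase.mpr ⟨(hrange (ι b)).mpr ⟨b, rfl⟩, Finset.mem_univ _⟩
    · intro b _ c _ h; exact hinj h
    · intro a ha
      obtain ⟨b, rfl⟩ := (hrange a).mp (Finset.mem_erase.mp ha).1
      exact ⟨b, Finset.mem_univ _, rfl⟩
    · intro b _; rfl
  have h2 := Finset.add_sum_erase Finset.univ f (Finset.mem_univ u)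
  rw [h1]; linarith

-- inverse of a matrix with one more row/column deleted
private lemma inv_del {α β : Type*} [Fintype α] [DecidableEq α] [Fintype β] [DecidableEq β]
    (M : Matrix α α ℝ) (hM : IsUnit M) (u : α) (ha : M⁻¹ u u ≠ 0)
    (ι : β → α) (hinj : Function.Injective ι)
    (hrange : ∀ a : α, a ≠ u ↔ ∃ b, ι b = a) :
    (M.submatrix ι ι)⁻¹ = Matrix.of (fun b c : β =>
      M⁻¹ (ι b) (ι c) - M⁻¹ (ι b) u * M⁻¹ u (ι c) / M⁻¹ u u) := by
  have hdet : IsUnit M.det := (Matrix.isUnit_iff_isUnit_det M).mp hM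
  have hMM : M * M⁻¹ = 1 := Matrix.mul_nonsing_inv M hdet
  have hmul : ∀ p q : α, ∑ a : α, M p a * M⁻¹ a q = if p = q then 1 else 0 := by
    intro p q
    have := congrFun (congrFun hMM p) q
    rwa [Matrix.mul_apply, Matrix.one_apply] at this
  apply Matrix.inv_eq_right_inv
  ext i j
  rw [Matrix.mul_apply, Matrix.one_apply]
  have hne : ι i ≠ u := (hrange (ι i)).mpr ⟨i, rfl⟩
  have key := sum_del u ι hinj hrange
    (fun a => M (ι i) a * (M⁻¹ a (ι j) - M⁻¹ a u * M⁻¹ u (ι j) / M⁻¹ u u))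
  have e1 : ∀ a : α, M (ι i) a * (M⁻¹ a (ι j) - M⁻¹ a u * M⁻¹ u (ι j) / M⁻¹ u u)
      = M (ι i) a * M⁻¹ a (ι j) - (M (ι i) a * M⁻¹ a u) * (M⁻¹ u (ι j) / M⁻¹ u u) := by
    intro a; ring
  have e2 : (∑ a : α, M (ι i) a * (M⁻¹ a (ι j) - M⁻¹ a u * M⁻¹ u (ι j) / M⁻¹ u u))
      = (if ι i = ι j then (1:ℝ) else 0) := by
    simp only [e1, Finset.sum_sub_distrib, ← Finset.sum_mul, hmul, if_neg hne]
    ring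
  have e3 : M (ι i) u * (M⁻¹ u (ι j) - M⁻¹ u u * M⁻¹ u (ι j) / M⁻¹ u u) = 0 := by
    rw [mul_div_cancel_left₀ _ ha, sub_self, mul_zero]
  calc ∑ k : β, M.submatrix ι ι i k *
        (M⁻¹ (ι k) (ι j) - M⁻¹ (ι k) u * M⁻¹ u (ι j) / M⁻¹ u u)
      = (∑ a : α, M (ι i) a * (M⁻¹ a (ι j) - M⁻¹ a u * M⁻¹ u (ι j) / M⁻¹ u u))
          - M (ι i) u * (M⁻¹ u (ι j) - M⁻¹ u u * M⁻¹ u (ι j) / M⁻¹ u u) := by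
        rw [← key]; rfl
    _ = (if ι i = ι j then (1:ℝ) else 0) - 0 := by rw [e2, e3]
    _ = if i = j then 1 else 0 := by
        rw [sub_zero]
        congr 1
        simp [hinj.eq_iff]

private lemma delta_sum {α β : Type*} [Fintype α] [DecidableEq α] [Fintype β]
    (Q : Matrix α α ℝ) (hsymQ : ∀ i j, Q i j = Q j i)
    (u : α) (ha : Q u u ≠ 0) (ι : β → α) (hinj : Function.Injective ι)
    (hrange : ∀ a : α, a ≠ u ↔ ∃ b, ι b = a)
    (g : α → ℝ) (d : ℝ) (hd : d ≠ 0) :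
    (∑ a : α, ∑ b : α, g a / d * Q a b * g b)
      - (∑ i : β, ∑ j : β, g (ι i) / d *
          (Q (ι i) (ι j) - Q (ι i) u * Q u (ι j) / Q u u) * g (ι j))
      = (∑ b : α, Q u b * g b) ^ 2 / (d * Q u u) := by
  set x : ℝ := ∑ b : α, Q u b * g b with hx
  set T : α → α → ℝ := fun p q => g p / d * (Q p q - Q p u * Q u q / Q u u) * g q with hT
  have hTu : ∀ q, T u q = 0 := by
    intro q
    simp only [hT, mul_div_cancel_left₀ _ ha, sub_self, mul_zero, zero_mul]
  have hTpu : ∀ p, T p u = 0 := by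
    intro p
    simp only [hT, mul_div_assoc, div_self ha, mul_one, sub_self, mul_zero, zero_mul]
  have hinner : ∀ p : α, ∑ j : β, T p (ι j) = (∑ q : α, T p q) - T p u :=
    fun p => sum_del u ι hinj hrange (fun q => T p q)
  have houter : ∑ i : β, ∑ j : β, T (ι i) (ι j)
      = (∑ p : α, ((∑ q : α, T p q) - T p u)) - ((∑ q : α, T u q) - T u u) := by
    calc ∑ i : β, ∑ j : β, T (ι i) (ι j)
        = ∑ i : β, ((∑ q : α, T (ι i) q) - T (ι i) u) := by
          exact Finset.sum_congr rfl fun i _ => hinner (ι i)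
      _ = _ := sum_del u ι hinj hrange (fun p => (∑ q : α, T p q) - T p u)
  have hzero : ∑ q : α, T u q = 0 := Finset.sum_eq_zero fun q _ => hTu q
  have hβ : ∑ i : β, ∑ j : β, T (ι i) (ι j)
      = ∑ p : α, ∑ q : α, T p q := by
    rw [houter, hzero, hTu u, Finset.sum_sub_distrib]
    simp only [hTpu, Finset.sum_const, smul_eq_mul, mul_zero, sub_zero]
    ring
  -- expand T over all of α
  have hexp : ∀ p q : α, T p q
      = g p / d * Q p q * g q - (g p * Q p u) * (Q u q * g q) / (d * Q u u) := by
    intro p q; simp only [hT]; field_simp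
  have hsum2 : ∑ p : α, ∑ q : α, T p q
      = (∑ p : α, ∑ q : α, g p / d * Q p q * g q) - x ^ 2 / (d * Q u u) := by
    have h1 : ∀ p : α, ∑ q : α, T p q
        = (∑ q : α, g p / d * Q p q * g q) - (g p * Q p u) * x / (d * Q u u) := by
      intro p
      simp only [hexp, Finset.sum_sub_distrib]
      congr 1
      have : ∀ q : α, g p * Q p u * (Q u q * g q) / (d * Q u u)
          = (g p * Q p u / (d * Q u u)) * (Q u q * g q) := fun q => by ring
      simp only [this, ← Finset.mul_sum, ← hx]
      ring
    calc ∑ p : α, ∑ q : α, T p q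
        = ∑ p : α, ((∑ q : α, g p / d * Q p q * g q)
            - (g p * Q p u) * x / (d * Q u u)) :=
          Finset.sum_congr rfl fun p _ => h1 p
      _ = (∑ p : α, ∑ q : α, g p / d * Q p q * g q)
            - ∑ p : α, (g p * Q p u) * x / (d * Q u u) := by
          rw [Finset.sum_sub_distrib]
      _ = _ := by
          congr 1
          have : ∀ p : α, (g p * Q p u) * x / (d * Q u u)
              = (x / (d * Q u u)) * (Q u p * g p) := fun p => by rw [hsymQ p u]; ring
          simp only [this, ← Finset.mul_sum, ← hx]
          ring
  have hgoal : (∑ i : β, ∑ j : β, g (ι i) / d *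
          (Q (ι i) (ι j) - Q (ι i) u * Q u (ι j) / Q u u) * g (ι j))
      = ∑ i : β, ∑ j : β, T (ι i) (ι j) := rfl
  rw [hgoal, hβ, hsum2]
  ring

private lemma sum_ground {n : ℕ} (S : Finset (Fin n)) (f : Fin n → ℝ)
    (hf : ∀ i ∈ S, f i = 0) :
    ∑ i : Fin n, f i = ∑ b : {i : Fin n // i ∉ S}, f b.1 := by
  classical
  have h1 : ∑ i : Fin n, f i = ∑ i ∈ Sᶜ, f i :=
    (Finset.sum_subset (Finset.subset_univ Sᶜ)
      (fun x _ hx => hf x (by simpa using hx))).symm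
  rw [h1]
  exact Finset.sum_subtype Sᶜ (fun x => Finset.mem_compl) f

private lemma lap_quad {n : ℕ} (A : Matrix (Fin n) (Fin n) ℝ)
    (hsym : A.IsSymm)
    (deg : Fin n → ℝ) (hdeg : ∀ i, deg i = ∑ j, A i j)
    (L : Matrix (Fin n) (Fin n) ℝ) (hL : L = Matrix.diagonal deg - A)
    (y : Fin n → ℝ) :
    dotProduct y (L *ᵥ y) = (1/2) * ∑ i, ∑ j, A i j * (y i - y j)^2 := by
  have colsum : ∀ j, ∑ i, A i j = deg j := by
    intro j
    rw [hdeg]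
    exact Finset.sum_congr rfl fun i _ => hsym.apply j i
  have stepa : dotProduct y (L *ᵥ y)
      = (∑ i, deg i * y i ^ 2) - ∑ i, ∑ j, A i j * y i * y j := by
    simp only [dotProduct, mulVec, hL, Matrix.sub_apply, dotProduct,
      Matrix.diagonal_apply, sub_mul, mul_sub, Finset.sum_sub_distrib,
      Finset.mul_sum]
    congr 1
    · apply Finset.sum_congr rfl
      intro i _
      rw [Finset.sum_eq_single i]
      · simp; ring
      · intro b _ hb; simp [Ne.symm hb]
      · intro h; exact absurd (Finset.mem_univ i) h
    · apply Finset.sum_congr rfl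
      intro i _
      apply Finset.sum_congr rfl
      intro j _
      ring
  have stepb : ∑ i, ∑ j, A i j * (y i - y j)^2
      = 2*(∑ i, deg i * y i ^ 2) - 2*(∑ i, ∑ j, A i j * y i * y j) := by
    have e : ∀ i j, A i j * (y i - y j)^2
        = A i j * y i ^ 2 + A i j * y j ^ 2 - 2 * (A i j * y i * y j) := by
      intros; ring
    simp only [e, Finset.sum_add_distrib, Finset.sum_sub_distrib]
    have h1 : ∑ i, ∑ j, A i j * y i ^ 2 = ∑ i, deg i * y i ^ 2 := by
      apply Finset.sum_congr rfl
      intro i _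
      rw [← Finset.sum_mul, ← hdeg]
    have h2 : ∑ i : Fin n, ∑ j, A i j * y j ^ 2 = ∑ i, deg i * y i ^ 2 := by
      rw [Finset.sum_comm]
      apply Finset.sum_congr rfl
      intro j _
      rw [← Finset.sum_mul, colsum]
    have h3 : ∑ i : Fin n, ∑ j, 2 * (A i j * y i * y j)
        = 2 * ∑ i : Fin n, ∑ j, A i j * y i * y j := by
      rw [Finset.mul_sum]
      exact Finset.sum_congr rfl fun i _ => by rw [Finset.mul_sum]
    rw [h1, h2, h3]
    ring
  rw [stepa]
  rw [stepb]
  ring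

private lemma walk_const {n : ℕ} (A : Matrix (Fin n) (Fin n) ℝ) (y : Fin n → ℝ)
    (h : ∀ i j, A i j ≠ 0 → y i = y j) :
    ∀ (k : ℕ) (i j : Fin n), (A ^ k) i j ≠ 0 → y i = y j := by
  intro k
  induction k with
  | zero =>
    intro i j hij
    rcases eq_or_ne i j with rfl | hij'
    · rfl
    · rw [pow_zero, Matrix.one_apply] at hij
      simp [hij'] at hij
  | succ m ih =>
    intro i j hij
    rw [pow_succ, Matrix.mul_apply] at hij
    obtain ⟨l, hl⟩ := Finset.exists_ne_zero_of_sum_ne_zero hij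
    have h1 : (A ^ m) i l ≠ 0 := fun h0 => hl.2 (by rw [h0, zero_mul])
    have h2 : A l j ≠ 0 := fun h0 => hl.2 (by rw [h0, mul_zero])
    exact (ih i l h1).trans (h l j h2)

private lemma grounded_posdef {n : ℕ} (A : Matrix (Fin n) (Fin n) ℝ)
    (hsym : A.IsSymm) (hnonneg : ∀ i j, 0 ≤ A i j)
    (hconn : ∀ i j : Fin n, ∃ k : ℕ, (A ^ k) i j ≠ 0)
    (deg : Fin n → ℝ) (hdeg : ∀ i, deg i = ∑ j, A i j)
    (L : Matrix (Fin n) (Fin n) ℝ) (hL : L = Matrix.diagonal deg - A)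
    (S : Finset (Fin n)) (hS : S.Nonempty) :
    (L.submatrix (fun x : {i : Fin n // i ∉ S} => (x : Fin n))
        (fun x : {i : Fin n // i ∉ S} => (x : Fin n))).PosDef := by
  classical
  have hLsym : L.IsSymm := by
    rw [hL, Matrix.IsSymm]
    rw [Matrix.transpose_sub, Matrix.diagonal_transpose, hsym.eq]
  rw [Matrix.posDef_iff_dotProduct_mulVec]
  constructor
  · -- Hermitian
    ext i j
    simp only [Matrix.conjTranspose_apply, Matrix.submatrix_apply, star_trivial]
    exact hLsym.apply _ _
  · intro x hx
    set y : Fin n → ℝ := fun i => if h : i ∉ S then x ⟨i, h⟩ else 0 with hy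
    have hyS : ∀ i ∈ S, y i = 0 := by
      intro i hi
      simp only [hy, dif_neg (not_not.mpr hi)]
    have hyc : ∀ b : {i : Fin n // i ∉ S}, y b.1 = x b := by
      intro b
      simp only [hy, dif_pos b.2]
    have claim1 : dotProduct (star x)
        ((L.submatrix (fun x : {i : Fin n // i ∉ S} => (x : Fin n))
          (fun x : {i : Fin n // i ∉ S} => (x : Fin n))) *ᵥ x)
        = dotProduct y (L *ᵥ y) := by
      rw [star_trivial]
      simp only [dotProduct, mulVec, dotProduct, Matrix.submatrix_apply]
      rw [sum_ground S (fun i => y i * ∑ j, L i j * y j)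
        (fun i hi => by simp [hyS i hi])]
      apply Finset.sum_congr rfl
      intro b _
      rw [hyc b]
      congr 1
      rw [sum_ground S (fun j => L b.1 j * y j)
        (fun j hj => by simp [hyS j hj])]
      apply Finset.sum_congr rfl
      intro c _
      rw [hyc c]
    rw [claim1, lap_quad A hsym deg hdeg L hL y]
    have hnn : ∀ i ∈ (Finset.univ : Finset (Fin n)),
        0 ≤ ∑ j, A i j * (y i - y j)^2 := by
      intro i _
      exact Finset.sum_nonneg fun j _ => mul_nonneg (hnonneg i j) (sq_nonneg _)
    have hge : 0 ≤ ∑ i, ∑ j, A i j * (y i - y j)^2 := Finset.sum_nonneg hnn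
    rcases lt_or_eq_of_le hge with hlt | heq
    · linarith
    · exfalso
      -- each term vanishes
      have hterm : ∀ i j, A i j * (y i - y j)^2 = 0 := by
        intro i j
        have h1 := (Finset.sum_eq_zero_iff_of_nonneg hnn).mp heq.symm i (Finset.mem_univ i)
        exact (Finset.sum_eq_zero_iff_of_nonneg
          (fun j _ => mul_nonneg (hnonneg i j) (sq_nonneg _))).mp h1 j (Finset.mem_univ j)
      have hrel : ∀ i j, A i j ≠ 0 → y i = y j := by
        intro i j hij
        have := hterm i j
        rcases mul_eq_zero.mp this with h | h
        · exact absurd h hij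
        · have := (pow_eq_zero_iff two_ne_zero).mp h
          linarith [sub_eq_zero.mp this]
      obtain ⟨a, hxa⟩ := Function.ne_iff.mp hx
      obtain ⟨s, hs⟩ := hS
      obtain ⟨k, hk⟩ := hconn a.1 s
      have h1 : y a.1 = y s := walk_const A y hrel k a.1 s hk
      rw [hyc a, hyS s hs] at h1
      exact hxa h1


/-- Group walk centrality `H(S) = π_{−S}ᵀ (L_{−S})⁻¹ d_{−S}`, where the subscript `−S` denotes
deletion of the rows/columns (entries) indexed by `S`. -/
noncomputable def gwcAlg (n : ℕ) (L : Matrix (Fin n) (Fin n) ℝ) (p dg : Fin n → ℝ)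
    (S : Finset (Fin n)) : ℝ :=
  ∑ a : {i : Fin n // i ∉ S}, ∑ b : {i : Fin n // i ∉ S},
    p a.1 *
      ((L.submatrix (fun x : {i : Fin n // i ∉ S} => (x : Fin n))
          (fun x : {i : Fin n // i ∉ S} => (x : Fin n)))⁻¹ a b) *
      dg b.1

/-- For a connected weighted undirected graph with Laplacian `L`, a nonempty proper
vertex subset `S` and any vertex `u ∈ V∖S`, the marginal gain `Δ(u,S) = H(S) − H(S ∪ {u})`
satisfies `Δ(u,S) = (e_uᵀ (L_{−S})⁻¹ d_{−S})² / (d · e_uᵀ (L_{−S})⁻¹ e_u)`. -/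
theorem marginal_gain_formula
    (n : ℕ) (hn : 0 < n)
    (A : Matrix (Fin n) (Fin n) ℝ)
    (hsym : A.IsSymm)
    (hnonneg : ∀ i j, 0 ≤ A i j)
    (hloop : ∀ i, A i i = 0)
    (hconn : ∀ i j : Fin n, ∃ k : ℕ, (A ^ k) i j ≠ 0)
    (deg : Fin n → ℝ) (hdeg : ∀ i, deg i = ∑ j, A i j)
    (d : ℝ) (hd : d = ∑ i, deg i)
    (pi' : Fin n → ℝ) (hpi : ∀ i, pi' i = deg i / d)
    (L : Matrix (Fin n) (Fin n) ℝ) (hL : L = Matrix.diagonal deg - A)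
    (S : Finset (Fin n)) (hS : S.Nonempty) (hSproper : S ≠ Finset.univ)
    (u : Fin n) (hu : u ∉ S) :
    gwcAlg n L pi' deg S - gwcAlg n L pi' deg (insert u S)
      = (∑ b : {i : Fin n // i ∉ S},
            ((L.submatrix (fun x : {i : Fin n // i ∉ S} => (x : Fin n))
                (fun x : {i : Fin n // i ∉ S} => (x : Fin n)))⁻¹ ⟨u, hu⟩ b) * deg b.1) ^ 2
        / (d *
            ((L.submatrix (fun x : {i : Fin n // i ∉ S} => (x : Fin n))
                (fun x : {i : Fin n // i ∉ S} => (x : Fin n)))⁻¹ ⟨u, hu⟩ ⟨u, hu⟩)) := by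
  classical
  -- basic facts
  have hd0 : d ≠ 0 := by
    intro h0
    have hdegnn : ∀ i, 0 ≤ deg i := fun i =>
      (hdeg i) ▸ Finset.sum_nonneg fun j _ => hnonneg i j
    have hdeg0 : ∀ i, deg i = 0 := by
      intro i
      have h1 : ∑ i, deg i = 0 := by rw [← hd, h0]
      exact (Finset.sum_eq_zero_iff_of_nonneg fun i _ => hdegnn i).mp h1 i (Finset.mem_univ i)
    have hA0 : A = 0 := by
      ext i j
      have h1 : ∑ j, A i j = 0 := by rw [← hdeg, hdeg0]
      exact (Finset.sum_eq_zero_iff_of_nonneg fun j _ => hnonneg i j).mp h1 j (Finset.mem_univ j)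
    obtain ⟨s, hs⟩ := hS
    have hus : u ≠ s := fun h => hu (h ▸ hs)
    obtain ⟨k, hk⟩ := hconn u s
    cases k with
    | zero =>
      rw [pow_zero, Matrix.one_apply, if_neg hus] at hk
      exact hk rfl
    | succ m =>
      rw [hA0, zero_pow (Nat.succ_ne_zero m)] at hk
      exact hk rfl
  set M := L.submatrix (fun x : {i : Fin n // i ∉ S} => (x : Fin n))
      (fun x : {i : Fin n // i ∉ S} => (x : Fin n)) with hM
  have hMpd : M.PosDef := grounded_posdef A hsym hnonneg hconn deg hdeg L hL S hS
  have hMunit : IsUnit M := hMpd.isUnit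
  have hMinvPD : M⁻¹.PosDef := hMpd.inv
  set u₀ : {i : Fin n // i ∉ S} := ⟨u, hu⟩ with hu₀
  have hMuu : 0 < M⁻¹ u₀ u₀ := by
    have hsne : (Pi.single u₀ 1 : {i : Fin n // i ∉ S} → ℝ) ≠ 0 := by
      intro h
      have := congrFun h u₀
      rw [Pi.single_eq_same] at this
      exact one_ne_zero this
    have h2 := hMinvPD.dotProduct_mulVec_pos hsne
    have h3 : dotProduct (star (Pi.single u₀ 1 : {i : Fin n // i ∉ S} → ℝ))
          (M⁻¹ *ᵥ Pi.single u₀ 1) = M⁻¹ u₀ u₀ := by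
      have hstar : star (Pi.single u₀ 1 : {i : Fin n // i ∉ S} → ℝ) = Pi.single u₀ 1 := by
        funext i; exact star_trivial _
      rw [hstar]
      simp [dotProduct, mulVec, Pi.single_apply, mul_ite, ite_mul,
        mul_one, mul_zero, zero_mul, one_mul]
    rwa [h3] at h2
  have hMinvsym : ∀ i j, M⁻¹ i j = M⁻¹ j i := by
    intro i j
    have := congrFun (congrFun hMinvPD.1 i) j
    rw [Matrix.conjTranspose_apply, star_trivial] at this
    exact this.symm
  -- the deleted-index injection
  let ι : {i : Fin n // i ∉ insert u S} → {i : Fin n // i ∉ S} :=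
    fun b => ⟨b.1, fun h => b.2 (Finset.mem_insert_of_mem h)⟩
  have hinj : Function.Injective ι := by
    intro b c h
    have h2 : (ι b).1 = (ι c).1 := congrArg Subtype.val h
    exact Subtype.ext h2
  have hrange : ∀ a : {i : Fin n // i ∉ S}, a ≠ u₀ ↔ ∃ b, ι b = a := by
    intro a
    constructor
    · intro hne
      have ha : a.1 ∉ insert u S := by
        rw [Finset.mem_insert]
        rintro (h | h)
        · exact hne (Subtype.ext h)
        · exact a.2 h
      exact ⟨⟨a.1, ha⟩, rfl⟩
    · rintro ⟨b, rfl⟩ h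
      have hb : b.1 = u := congrArg Subtype.val h
      apply b.2
      rw [hb]
      exact Finset.mem_insert_self u S
  have hNinv := inv_del M hMunit u₀ hMuu.ne' ι hinj hrange
  have hsub : L.submatrix (fun x : {i : Fin n // i ∉ insert u S} => (x : Fin n))
      (fun x : {i : Fin n // i ∉ insert u S} => (x : Fin n)) = M.submatrix ι ι := rfl
  have key := delta_sum M⁻¹ hMinvsym u₀ hMuu.ne' ι hinj hrange
    (fun a => deg a.1) d hd0
  simp only [gwcAlg, hpi, hsub, hNinv, Matrix.of_apply]
  exact key
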